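/- For a nilpotent group with a twisted conjugation action, transitivity is equivalent to triviality of the fixed subgroup: let N be a nilpotent group, φ : N → N an automorphism, and suppose N admits a φ-stable central series 1 = N_k ⊴ ⋯ ⊴ N_0 = N whose successive quotients N_i/N_{i+1} are finite-dimensional ℚ-vector spaces (uniquely divisible torsion-free abelian groups of finite rank). Consider the right action of N on itself by n : w ↦ n⁻¹·w·φ(n). Then this action is transitive if and only if the stabilizer of the identity is trivial, i.e., if and only if φ(n) = n implies n = 1. -/

import Mathlib

theorem twisted_aux_inj_iff_surj {Q : Type*} [CommGroup Q] (ψ : Q →* Q)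
    (tf : ∀ m : ℕ, 0 < m → ∀ v w : Q, v ^ m = w ^ m → v = w)
    (hdiv : ∀ (v : Q) (m : ℕ), 0 < m → ∃ u, u ^ m = v)
    (fr : ∃ T : Finset Q, ∀ v : Q, ∃ m : ℕ, 0 < m ∧ v ^ m ∈ Subgroup.closure (T : Set Q)) :
    Function.Injective ψ ↔ Function.Surjective ψ := by
  classical
  have tfZ : ∀ (n : ℤ), n ≠ 0 → ∀ v w : Q, v ^ n = w ^ n → v = w := by
    intro n hn v w h
    rcases hn.lt_or_gt with h' | h'
    · have h2 : v ^ (-n) = w ^ (-n) := by rw [zpow_neg, zpow_neg, h]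
      rw [show (-n) = ((-n).toNat : ℤ) by omega, zpow_natCast, zpow_natCast] at h2
      exact tf (-n).toNat (by omega) _ _ h2
    · rw [show n = (n.toNat : ℤ) by omega, zpow_natCast, zpow_natCast] at h
      exact tf n.toNat (by omega) _ _ h
  choose rt hrt using fun (v : Q) (m : {m : ℕ // 0 < m}) => hdiv v m.1 m.2
  letI : SMul ℚ (Additive Q) :=
    ⟨fun q v => Additive.ofMul (rt ((Additive.toMul v) ^ q.num) ⟨q.den, q.pos⟩)⟩
  have hsmul : ∀ (q : ℚ) (v : Additive Q),
      (Additive.toMul (q • v)) ^ (q.den : ℤ) = (Additive.toMul v) ^ q.num := by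
    intro q v
    show (rt ((Additive.toMul v) ^ q.num) ⟨q.den, q.pos⟩ : Q) ^ ((q.den:ℕ) : ℤ) = _
    rw [zpow_natCast]
    exact hrt _ _
  have hqd : ∀ q : ℚ, q * (q.den : ℚ) = (q.num : ℚ) := by
    intro q
    have h1 : ((q.den : ℚ)) ≠ 0 := by
      exact_mod_cast q.den_pos.ne'
    exact Rat.mul_den_eq_num q
  have hchar : ∀ (q : ℚ) (a b : ℤ), b ≠ 0 → (q * (b:ℚ) = (a:ℚ)) → ∀ (v u : Additive Q),
      (Additive.toMul u) ^ b = (Additive.toMul v) ^ a → q • v = u := by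
    intro q a b hb hq v u h
    have hden : (q.den : ℤ) ≠ 0 := by exact_mod_cast q.den_pos.ne'
    have hcross : q.num * b = a * q.den := by
      have h2 : (q.num : ℚ) * b = a * q.den := by
        have := hqd q
        linear_combination ((q.den:ℚ)) * hq - (b:ℚ) * hqd q
      exact_mod_cast h2
    have key : (Additive.toMul (q • v)) ^ (b * q.den) = (Additive.toMul u) ^ (b * q.den) := by
      calc (Additive.toMul (q • v)) ^ (b * q.den)
          = ((Additive.toMul (q • v)) ^ (q.den:ℤ)) ^ b := by
            rw [← zpow_mul, mul_comm]
        _ = ((Additive.toMul v) ^ q.num) ^ b := by rw [hsmul]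
        _ = (Additive.toMul v) ^ (q.num * b) := by rw [← zpow_mul]
        _ = (Additive.toMul v) ^ (a * q.den) := by rw [hcross]
        _ = ((Additive.toMul v) ^ a) ^ (q.den:ℤ) := by rw [← zpow_mul]
        _ = ((Additive.toMul u) ^ b) ^ (q.den:ℤ) := by rw [h]
        _ = (Additive.toMul u) ^ (b * q.den) := by rw [← zpow_mul]
    exact tfZ (b * q.den) (mul_ne_zero hb hden) _ _ key
  have hdenQ : ∀ q : ℚ, ((q.den : ℤ) : ℚ) = (q.den : ℚ) := by intro q; push_cast; ring
  letI : MulAction ℚ (Additive Q) :=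
    { one_smul := fun v => hchar 1 1 1 one_ne_zero (by norm_num) v v (by norm_num)
      mul_smul := fun q r v => by
        refine hchar (q * r) (q.num * r.num) (q.den * r.den)
          (by positivity) ?_ v (q • r • v) ?_
        · push_cast
          calc (q * r) * ((q.den:ℚ) * (r.den:ℚ)) = (q * q.den) * (r * r.den) := by ring
            _ = (q.num : ℚ) * (r.num : ℚ) := by rw [hqd, hqd]
        · push_cast
          calc (Additive.toMul (q • r • v)) ^ ((q.den : ℤ) * (r.den:ℤ))
              = ((Additive.toMul (q • r • v)) ^ (q.den:ℤ)) ^ (r.den:ℤ) := by rw [← zpow_mul]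
            _ = ((Additive.toMul (r • v)) ^ q.num) ^ (r.den:ℤ) := by rw [hsmul]
            _ = ((Additive.toMul (r • v)) ^ (r.den:ℤ)) ^ q.num := by
                rw [← zpow_mul, mul_comm, zpow_mul]
            _ = ((Additive.toMul v) ^ r.num) ^ q.num := by rw [hsmul]
            _ = (Additive.toMul v) ^ (q.num * r.num) := by rw [← zpow_mul, mul_comm]
      }
  letI : DistribMulAction ℚ (Additive Q) :=
    { smul_zero := fun q => hchar q q.num q.den
        (by exact_mod_cast q.den_pos.ne') (by rw [hdenQ]; exact hqd q) 0 0 (by simp)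
      smul_add := fun q v w => by
        refine hchar q q.num q.den (by exact_mod_cast q.den_pos.ne')
          (by rw [hdenQ]; exact hqd q) (v + w) (q • v + q • w) ?_
        have : Additive.toMul (q • v + q • w) = Additive.toMul (q • v) * Additive.toMul (q • w) := rfl
        rw [this]
        rw [mul_zpow, hsmul, hsmul]
        have : Additive.toMul (v + w) = Additive.toMul v * Additive.toMul w := rfl
        rw [this, mul_zpow] }
  letI : Module ℚ (Additive Q) :=
    { add_smul := fun q r v => by
        refine hchar (q + r) (q.num * r.den + r.num * q.den) (q.den * r.den)
          (by positivity) ?_ v (q • v + r • v) ?_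
        · push_cast
          calc (q + r) * ((q.den:ℚ) * (r.den:ℚ))
              = (q * q.den) * r.den + (r * r.den) * q.den := by ring
            _ = (q.num:ℚ) * r.den + (r.num:ℚ) * q.den := by rw [hqd, hqd]
        · have hmul : Additive.toMul (q • v + r • v)
              = Additive.toMul (q • v) * Additive.toMul (r • v) := rfl
          push_cast
          rw [hmul, mul_zpow]
          calc (Additive.toMul (q • v)) ^ ((q.den:ℤ) * r.den) * (Additive.toMul (r • v)) ^ ((q.den:ℤ) * r.den)
              = ((Additive.toMul (q • v)) ^ (q.den:ℤ)) ^ (r.den:ℤ)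
                * ((Additive.toMul (r • v)) ^ (r.den:ℤ)) ^ (q.den:ℤ) := by
                rw [← zpow_mul, ← zpow_mul, mul_comm (q.den:ℤ)]
            _ = ((Additive.toMul v) ^ q.num) ^ (r.den:ℤ) * ((Additive.toMul v) ^ r.num) ^ (q.den:ℤ) := by
                rw [hsmul, hsmul]
            _ = (Additive.toMul v) ^ (q.num * r.den + r.num * q.den) := by
                rw [← zpow_mul, ← zpow_mul, ← zpow_add]
      zero_smul := fun v => hchar 0 0 1 one_ne_zero (by norm_num) v 0 (by simp) }
  let ψA : Additive Q →+ Additive Q := MonoidHom.toAdditive ψ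
  have hpsiA : ∀ v : Additive Q, Additive.toMul (ψA v) = ψ (Additive.toMul v) := fun v => rfl
  let ψL : Additive Q →ₗ[ℚ] Additive Q :=
    { toFun := ψA, map_add' := ψA.map_add,
      map_smul' := fun q v => by
        refine (hchar q q.num q.den (by exact_mod_cast q.den_pos.ne')
          (by rw [hdenQ]; exact hqd q) (ψA v) (ψA (q • v)) ?_).symm
        rw [hpsiA, hpsiA, ← MonoidHom.map_zpow ψ, ← MonoidHom.map_zpow ψ, hsmul] }
  obtain ⟨T, hT⟩ := fr
  let TA : Finset (Additive Q) := T.image Additive.ofMul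
  have hclos : ∀ x ∈ Subgroup.closure (T : Set Q),
      Additive.ofMul x ∈ Submodule.span ℚ (TA : Set (Additive Q)) := by
    intro x hx
    induction hx using Subgroup.closure_induction with
    | mem y hy =>
        refine Submodule.subset_span ?_
        simp only [TA, Finset.coe_image, Set.mem_image, Finset.mem_coe]
        exact ⟨y, hy, rfl⟩
    | one => exact (Submodule.span ℚ (TA : Set (Additive Q))).zero_mem
    | mul y z _ _ hy hz => exact (Submodule.span ℚ (TA : Set (Additive Q))).add_mem hy hz
    | inv y _ hy => exact (Submodule.span ℚ (TA : Set (Additive Q))).neg_mem hy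
  have hspan : Submodule.span ℚ (TA : Set (Additive Q)) = ⊤ := by
    rw [Submodule.eq_top_iff']
    intro v
    obtain ⟨m, hm, hmem⟩ := hT (Additive.toMul v)
    have h2 := hclos _ hmem
    have h3 : Additive.ofMul ((Additive.toMul v) ^ m) = m • v := by
      rw [ofMul_pow]; simp
    rw [h3] at h2
    have h4 : v = ((m:ℚ))⁻¹ • ((m:ℚ) • v) := by
      rw [inv_smul_smul₀ (by exact_mod_cast hm.ne')]
    rw [h4]
    refine Submodule.smul_mem _ _ ?_
    rw [Nat.cast_smul_eq_nsmul]
    exact h2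
  haveI : Module.Finite ℚ (Additive Q) := Module.finite_def.mpr ⟨TA, hspan⟩
  have hinj : Function.Injective ψ ↔ Function.Injective ψL := Iff.rfl
  have hsurj : Function.Surjective ψ ↔ Function.Surjective ψL := Iff.rfl
  rw [hinj, hsurj, LinearMap.injective_iff_surjective]

set_option maxHeartbeats 1000000 in
theorem twisted_level_inj_iff_surj {N : Type*} [Group N] (φ : MulAut N)
    (H K : Subgroup N) (hKH : K ≤ H)
    (h_norm : ∀ x ∈ K, ∀ u : N, u * x * u⁻¹ ∈ K)
    (h_central : ∀ x ∈ H, ∀ u : N, x * u * x⁻¹ * u⁻¹ ∈ K)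
    (h_stableH : ∀ x : N, x ∈ H ↔ φ x ∈ H)
    (h_stableK : ∀ x : N, x ∈ K ↔ φ x ∈ K)
    (h_div : ∀ x ∈ H, ∀ m : ℕ, 0 < m → ∃ y ∈ H, x⁻¹ * y ^ m ∈ K)
    (h_uniq : ∀ m : ℕ, 0 < m → ∀ y ∈ H, ∀ z ∈ H, (y ^ m)⁻¹ * z ^ m ∈ K → y⁻¹ * z ∈ K)
    (h_fin : ∃ S : Finset N, (↑S : Set N) ⊆ (H : Set N) ∧
      ∀ x ∈ H, ∃ m : ℕ, 0 < m ∧ x ^ m ∈ Subgroup.closure ((↑S : Set N) ∪ (K : Set N))) :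
    (∀ y ∈ H, y⁻¹ * φ y ∈ K → y ∈ K) ↔
    (∀ w ∈ H, ∃ y ∈ H, (y⁻¹ * φ y) * w⁻¹ ∈ K) := by
  classical
  have cyc : ∀ a b : N, a * b ∈ K → b * a ∈ K := by
    intro a b h
    have := h_norm _ h b
    have e : b * (a * b) * b⁻¹ = b * a := by group
    rwa [e] at this
  set K' : Subgroup H := K.subgroupOf H with hK'
  haveI hnormal : K'.Normal := by
    constructor
    intro x hx u
    rw [Subgroup.mem_subgroupOf] at hx ⊢
    simpa using h_norm _ hx (u : N)
  set Q := H ⧸ K' with hQ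
  letI : CommGroup Q :=
    { (inferInstance : Group Q) with
      mul_comm := by
        intro a b
        obtain ⟨x, rfl⟩ := QuotientGroup.mk_surjective a
        obtain ⟨y, rfl⟩ := QuotientGroup.mk_surjective b
        show ((x * y : H) : Q) = ((y * x : H) : Q)
        rw [QuotientGroup.eq, Subgroup.mem_subgroupOf]
        have e : (((x * y)⁻¹ * (y * x) : H) : N)
            = ((y:N)⁻¹ * (x:N)⁻¹ * ((y:N)⁻¹)⁻¹ * ((x:N)⁻¹)⁻¹ : N) := by
          push_cast; group
        show (((x * y)⁻¹ * (y * x) : H) : N) ∈ K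
        rw [e]
        exact h_central (y:N)⁻¹ (inv_mem y.2) (x:N)⁻¹ }
  let p : H →* Q := QuotientGroup.mk' K'
  have peq : ∀ a b : H, p a = p b ↔ a⁻¹ * b ∈ K' := fun a b => QuotientGroup.eq
  have pone : ∀ a : H, p a = 1 ↔ (a : N) ∈ K := by
    intro a
    rw [show ((a:N) ∈ K ↔ a ∈ K') from (Subgroup.mem_subgroupOf).symm]
    exact QuotientGroup.eq_one_iff a
  have psurj : ∀ v : Q, ∃ x : H, p x = v := fun v => QuotientGroup.mk_surjective v
  have memH : ∀ x : H, (x : N)⁻¹ * φ x ∈ H := fun x =>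
    mul_mem (inv_mem x.2) ((h_stableH _).mp x.2)
  let ψ0 : H →* Q :=
    { toFun := fun x => p ⟨(x : N)⁻¹ * φ x, memH x⟩
      map_one' := by
        show p ⟨((1:H) : N)⁻¹ * φ ((1:H):N), memH 1⟩ = 1
        rw [pone]
        show ((1:N)⁻¹ * φ (1:N) : N) ∈ K
        simpa using one_mem K
      map_mul' := by
        intro x y
        show p ⟨((x*y:H) : N)⁻¹ * φ ((x*y:H):N), memH (x*y)⟩
          = p ⟨(x:N)⁻¹ * φ x, memH x⟩ * p ⟨(y:N)⁻¹ * φ y, memH y⟩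
        rw [← map_mul p, peq, Subgroup.mem_subgroupOf]
        set A := (x:N)⁻¹ * φ (x:N) with hA
        set B := (y:N)⁻¹ * φ (y:N) with hB
        have hAH : A ∈ H := memH x
        have e : (((⟨((x*y:H) : N)⁻¹ * φ ((x*y:H):N), memH (x*y)⟩ : H)⁻¹ *
            (⟨A, memH x⟩ * ⟨B, memH y⟩) : H) : N)
            = B⁻¹ * ((y:N)⁻¹ * A⁻¹ * (y:N) * A) * (B⁻¹)⁻¹ := by
          push_cast
          rw [hA, hB, map_mul]
          group
        rw [e]
        have hcomm : (y:N)⁻¹ * A⁻¹ * (y:N) * A ∈ K := by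
          simpa [mul_assoc] using h_central (y:N)⁻¹ (inv_mem y.2) A⁻¹
        exact h_norm _ hcomm B⁻¹ }
  have hkill : ∀ x ∈ K', ψ0 x = 1 := by
    intro x hx
    rw [Subgroup.mem_subgroupOf] at hx
    show p ⟨(x : N)⁻¹ * φ x, memH x⟩ = 1
    rw [pone]
    exact mul_mem (inv_mem hx) ((h_stableK _).mp hx)
  let ψQ : Q →* Q := QuotientGroup.lift K' ψ0 hkill
  have hψQ : ∀ x : H, ψQ (p x) = p ⟨(x:N)⁻¹ * φ x, memH x⟩ := fun x => rfl
  -- unique roots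
  have tf : ∀ m : ℕ, 0 < m → ∀ v w : Q, v ^ m = w ^ m → v = w := by
    intro m hm v w h
    obtain ⟨y, rfl⟩ := psurj v
    obtain ⟨z, rfl⟩ := psurj w
    rw [← map_pow, ← map_pow, peq, Subgroup.mem_subgroupOf] at h
    rw [peq, Subgroup.mem_subgroupOf]
    apply h_uniq m hm _ y.2 _ z.2
    have e : (((y ^ m)⁻¹ * z ^ m : H) : N) = ((y:N) ^ m)⁻¹ * (z:N) ^ m := by push_cast; rfl
    rwa [e] at h
  -- divisibility
  have hdivQ : ∀ (v : Q) (m : ℕ), 0 < m → ∃ u, u ^ m = v := by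
    intro v m hm
    obtain ⟨x, rfl⟩ := psurj v
    obtain ⟨y, hyH, hy⟩ := h_div (x:N) x.2 m hm
    refine ⟨p ⟨y, hyH⟩, ?_⟩
    rw [← map_pow, eq_comm, peq, Subgroup.mem_subgroupOf]
    have e : ((x⁻¹ * (⟨y, hyH⟩:H) ^ m : H) : N) = (x:N)⁻¹ * y ^ m := by push_cast; rfl
    rw [e]; exact hy
  -- finite rank
  have fr : ∃ T : Finset Q, ∀ v : Q, ∃ m : ℕ, 0 < m ∧ v ^ m ∈ Subgroup.closure (T : Set Q) := by
    obtain ⟨S, hSsub, hS⟩ := h_fin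
    refine ⟨S.attach.image (fun s => p ⟨s.1, hSsub s.2⟩), ?_⟩
    intro v
    obtain ⟨x, rfl⟩ := psurj v
    obtain ⟨m, hm, hx⟩ := hS (x:N) x.2
    refine ⟨m, hm, ?_⟩
    have hle : Subgroup.closure ((↑S : Set N) ∪ (K : Set N)) ≤ H := by
      rw [Subgroup.closure_le]
      exact Set.union_subset hSsub hKH
    have key : ∀ g (hg : g ∈ Subgroup.closure ((↑S : Set N) ∪ (K : Set N))) (h : g ∈ H),
        p ⟨g, h⟩ ∈ Subgroup.closure
          ((S.attach.image (fun s => p ⟨s.1, hSsub s.2⟩) : Finset Q) : Set Q) := by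
      intro g hg
      induction hg using Subgroup.closure_induction with
      | mem y hy =>
        intro h
        rcases hy with hy | hy
        · apply Subgroup.subset_closure
          simp only [Finset.coe_image, Set.mem_image, Finset.mem_coe, Finset.mem_attach]
          exact ⟨⟨y, hy⟩, by simp⟩
        · have : p ⟨y, h⟩ = 1 := (pone _).mpr hy
          rw [this]; exact one_mem _
      | one =>
        intro h
        have e : (⟨(1:N), h⟩ : H) = 1 := by ext; rfl
        rw [e, map_one]
        exact one_mem _
      | mul y z hy hz ihy ihz =>
        intro h
        have e : (⟨y * z, h⟩ : H) = ⟨y, hle hy⟩ * ⟨z, hle hz⟩ := by ext; rfl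
        rw [e, map_mul]
        exact mul_mem (ihy (hle hy)) (ihz (hle hz))
      | inv y hy ihy =>
        intro h
        have e : (⟨y⁻¹, h⟩ : H) = (⟨y, hle hy⟩)⁻¹ := by ext; rfl
        rw [e, map_inv]
        exact inv_mem (ihy (hle hy))
    rw [← map_pow]
    have e2 : (x ^ m : H) = ⟨(x:N) ^ m, pow_mem x.2 m⟩ := by ext; push_cast; rfl
    rw [e2]
    exact key _ hx _
  have main := twisted_aux_inj_iff_surj ψQ tf hdivQ fr
  constructor
  · intro hinj w hw
    have hsurj : Function.Surjective ψQ := by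
      apply main.mp
      rw [injective_iff_map_eq_one]
      intro a ha
      obtain ⟨y, rfl⟩ := psurj a
      rw [hψQ, pone] at ha
      rw [pone]
      exact hinj (y:N) y.2 ha
    obtain ⟨a, ha⟩ := hsurj (p ⟨w, hw⟩)
    obtain ⟨y, rfl⟩ := psurj a
    rw [hψQ, peq, Subgroup.mem_subgroupOf] at ha
    refine ⟨(y:N), y.2, ?_⟩
    have e : (((⟨(y:N)⁻¹ * φ y, memH y⟩ : H)⁻¹ * ⟨w, hw⟩ : H) : N)
        = ((y:N)⁻¹ * φ y)⁻¹ * w := by push_cast; rfl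
    rw [e] at ha
    have h1 := cyc _ _ ha
    have h2 := inv_mem h1
    rwa [mul_inv_rev, inv_inv] at h2
  · intro hsurj y hy hK
    have hinj : Function.Injective ψQ := by
      apply main.mpr
      intro b
      obtain ⟨w, rfl⟩ := psurj b
      obtain ⟨z, hzH, hz⟩ := hsurj (w:N) w.2
      refine ⟨p ⟨z, hzH⟩, ?_⟩
      rw [hψQ, peq, Subgroup.mem_subgroupOf]
      have h1 : (w:N) * (z⁻¹ * φ z)⁻¹ ∈ K := by
        have := inv_mem hz
        rwa [mul_inv_rev, inv_inv] at this
      have h2 := cyc _ _ h1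
      show ((((⟨(⟨z, hzH⟩:H)⁻¹ * φ (⟨z, hzH⟩:H), memH ⟨z, hzH⟩⟩ : H))⁻¹ * w : H) : N) ∈ K
      push_cast
      simpa [mul_assoc] using h2
    have h1 : ψQ (p ⟨y, hy⟩) = 1 := by
      rw [hψQ, pone]; exact hK
    have := (injective_iff_map_eq_one ψQ).mp hinj _ h1
    rwa [pone] at this

/-- For a nilpotent group `N` with an automorphism `φ` and a `φ`-stable central series
whose successive quotients are finite-dimensional `ℚ`-vector spaces, the twisted
conjugation action `n : w ↦ n⁻¹·w·φ(n)` of `N` on itself is transitive if and only if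
the stabilizer of the identity is trivial, i.e. `φ(n) = n → n = 1`. -/
theorem twisted_conjugation_transitive_iff_trivial_fixed_points
    {N : Type*} [Group N] (φ : MulAut N) (k : ℕ) (Nseq : ℕ → Subgroup N)
    (h_top : Nseq 0 = ⊤) (h_bot : Nseq k = ⊥)
    (h_mono : ∀ i : ℕ, Nseq (i + 1) ≤ Nseq i)
    (h_norm : ∀ i : ℕ, ∀ x ∈ Nseq i, ∀ u : N, u * x * u⁻¹ ∈ Nseq i)
    (h_central : ∀ i : ℕ, ∀ x ∈ Nseq i, ∀ u : N, x * u * x⁻¹ * u⁻¹ ∈ Nseq (i + 1))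
    (h_stable : ∀ i : ℕ, ∀ x : N, x ∈ Nseq i ↔ φ x ∈ Nseq i)
    -- the quotients are uniquely divisible (i.e. ℚ-vector spaces) ...
    (h_div : ∀ i : ℕ, ∀ x ∈ Nseq i, ∀ m : ℕ, 0 < m →
      ∃ y ∈ Nseq i, x⁻¹ * y ^ m ∈ Nseq (i + 1))
    (h_uniq : ∀ i : ℕ, ∀ m : ℕ, 0 < m → ∀ y ∈ Nseq i, ∀ z ∈ Nseq i,
      (y ^ m)⁻¹ * z ^ m ∈ Nseq (i + 1) → y⁻¹ * z ∈ Nseq (i + 1))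
    -- ... and of finite rank: finitely many elements generate each quotient up to
    -- torsion (i.e. up to taking roots)
    (h_fin : ∀ i : ℕ, ∃ S : Finset N, (↑S : Set N) ⊆ (Nseq i : Set N) ∧
      ∀ x ∈ Nseq i, ∃ m : ℕ, 0 < m ∧
        x ^ m ∈ Subgroup.closure ((↑S : Set N) ∪ (Nseq (i + 1) : Set N))) :
    (∀ w w' : N, ∃ n : N, n⁻¹ * w * φ n = w') ↔ (∀ n : N, φ n = n → n = 1) := by
  have level_iff : ∀ i : ℕ,
      (∀ y ∈ Nseq i, y⁻¹ * φ y ∈ Nseq (i+1) → y ∈ Nseq (i+1)) ↔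
      (∀ w ∈ Nseq i, ∃ y ∈ Nseq i, (y⁻¹ * φ y) * w⁻¹ ∈ Nseq (i+1)) := fun i =>
    twisted_level_inj_iff_surj φ (Nseq i) (Nseq (i+1)) (h_mono i) (h_norm (i+1)) (h_central i)
      (h_stable i) (h_stable (i+1)) (h_div i) (h_uniq i) (h_fin i)
  constructor
  · -- transitive → trivial fixed points
    intro htrans
    have fixUp : ∀ i : ℕ, ∀ n : N, n⁻¹ * φ n ∈ Nseq i → n ∈ Nseq i := by
      intro i
      induction i with
      | zero => intro n _; rw [h_top]; exact Subgroup.mem_top n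
      | succ i ih =>
        have surj : ∀ w ∈ Nseq i, ∃ y ∈ Nseq i, (y⁻¹ * φ y) * w⁻¹ ∈ Nseq (i+1) := by
          intro w hw
          obtain ⟨n, hn⟩ := htrans 1 w
          have hn' : n⁻¹ * φ n = w := by rw [← hn]; group
          have hnmem : n ∈ Nseq i := ih n (by rw [hn']; exact hw)
          exact ⟨n, hnmem, by rw [hn']; simpa using one_mem (Nseq (i+1))⟩
        have inj := (level_iff i).mpr surj
        intro n hn
        exact inj n (ih n (h_mono i hn)) hn
    intro n hfix
    have h1 : n⁻¹ * φ n ∈ Nseq k := by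
      rw [hfix]; simpa using one_mem (Nseq k)
    have h2 := fixUp k n h1
    rw [h_bot, Subgroup.mem_bot] at h2
    exact h2
  · -- trivial fixed points → transitive
    intro hfix
    have fixK : ∀ n : N, n⁻¹ * φ n ∈ Nseq k → n ∈ Nseq k := by
      intro n hn
      rw [h_bot, Subgroup.mem_bot] at hn ⊢
      exact hfix n (inv_mul_eq_one.mp hn).symm
    have step : ∀ i : ℕ, (∀ n : N, n⁻¹ * φ n ∈ Nseq (i+1) → n ∈ Nseq (i+1)) →
        (∀ n : N, n⁻¹ * φ n ∈ Nseq i → n ∈ Nseq i) := by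
      intro i fixSucc
      have inj : ∀ y ∈ Nseq i, y⁻¹ * φ y ∈ Nseq (i+1) → y ∈ Nseq (i+1) :=
        fun y _ h => fixSucc y h
      have surj := (level_iff i).mp inj
      intro n hn
      obtain ⟨y, hyi, hy⟩ := surj (n⁻¹ * φ n)⁻¹ (inv_mem hn)
      rw [inv_inv] at hy
      have hc : (n⁻¹ * φ n)⁻¹ * (φ y)⁻¹ * (n⁻¹ * φ n) * (φ y) ∈ Nseq (i+1) := by
        simpa [mul_assoc] using h_central i (n⁻¹ * φ n)⁻¹ (inv_mem hn) (φ y)⁻¹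
      have e : (n*y)⁻¹ * φ (n*y)
          = (y⁻¹ * φ y * (n⁻¹ * φ n)) *
            ((n⁻¹ * φ n)⁻¹ * (φ y)⁻¹ * (n⁻¹ * φ n) * (φ y)) := by
        rw [map_mul]; group
      have key : n * y ∈ Nseq (i+1) := fixSucc _ (by rw [e]; exact mul_mem hy hc)
      have e2 : n = (n * y) * y⁻¹ := by group
      rw [e2]
      exact mul_mem (h_mono i key) (inv_mem hyi)
    have fixAll : ∀ j : ℕ, ∀ n : N, n⁻¹ * φ n ∈ Nseq (k - j) → n ∈ Nseq (k - j) := by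
      intro j
      induction j with
      | zero => simpa using fixK
      | succ j ih =>
        by_cases hj : j < k
        · have hkj : k - j = (k - (j+1)) + 1 := by omega
          rw [hkj] at ih
          exact step _ ih
        · have hkj : k - (j+1) = k - j := by omega
          rw [hkj]; exact ih
    have surjAll : ∀ i : ℕ, i < k →
        ∀ w ∈ Nseq i, ∃ y ∈ Nseq i, (y⁻¹ * φ y) * w⁻¹ ∈ Nseq (i+1) := by
      intro i hi
      apply (level_iff i).mp
      intro y _ h
      have h2 := fixAll (k - (i+1)) y
      rw [show k - (k - (i+1)) = i+1 by omega] at h2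
      exact h2 h
    have trans : ∀ i : ℕ, i ≤ k → ∀ w w' : N, ∃ n : N, (n⁻¹ * w * φ n) * w'⁻¹ ∈ Nseq i := by
      intro i
      induction i with
      | zero => intro _ w w'; exact ⟨1, by rw [h_top]; exact Subgroup.mem_top _⟩
      | succ i ih =>
        intro hik w w'
        obtain ⟨n, hn⟩ := ih (by omega) w w'
        set d := (n⁻¹ * w * φ n) * w'⁻¹ with hd
        obtain ⟨y, hyi, hy⟩ := surjAll i (by omega) d⁻¹ (inv_mem hn)
        rw [inv_inv] at hy
        have hφy : φ y ∈ Nseq i := (h_stable i y).mp hyi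
        have hc1 : d⁻¹ * (φ y)⁻¹ * d * (φ y) ∈ Nseq (i+1) := by
          simpa [mul_assoc] using h_central i d⁻¹ (inv_mem hn) (φ y)⁻¹
        have hc2 : (φ y)⁻¹ * w' * (φ y) * w'⁻¹ ∈ Nseq (i+1) := by
          simpa [mul_assoc] using h_central i (φ y)⁻¹ (inv_mem hφy) w'
        refine ⟨n * y, ?_⟩
        have e : ((n*y)⁻¹ * w * φ (n*y)) * w'⁻¹
            = ((y⁻¹ * φ y) * d) * (d⁻¹ * (φ y)⁻¹ * d * (φ y))
              * ((φ y)⁻¹ * w' * (φ y) * w'⁻¹) := by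
          rw [map_mul, hd]; group
        rw [e]
        exact mul_mem (mul_mem hy hc1) hc2
    intro w w'
    obtain ⟨n, hn⟩ := trans k le_rfl w w'
    rw [h_bot, Subgroup.mem_bot] at hn
    exact ⟨n, mul_inv_eq_one.mp hn⟩
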